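/- Let Λ = {(y₁,y₂,y₃) ∈ ℝ³ : y₁ ∈ 2ℤ, y₂ ∈ ℤ, y₃ ∈ ℤ} and S(y) = (y₁² − y₂²)/|y|⁵. Then the series Σ_{y ∈ Λ, |y|_∞ > 2k} |S'(y)| converges for every integer k ≥ 2, where S'(y) = S(y) − fint_{Q'_y} S(z) dz with Q'_y = y + [−1,1]×[−1/2,1/2]², and moreover |Σ_{y ∈ Λ, |y|_∞ > 2k} S'(y)| ≤ 84π (4k−2)²/(4k−5)³. -/

import Mathlib

open MeasureTheory Real Set
open scoped BigOperators

set_option maxHeartbeats 1000000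

noncomputable section

abbrev E3 := EuclideanSpace ℝ (Fin 3)

def S (z : E3) : ℝ := (z 0 ^ 2 - z 1 ^ 2) / ‖z‖ ^ 5

/-- The lattice point of `Λ = 2ℤ × ℤ × ℤ` indexed by `m`. -/
def latt (m : ℤ × ℤ × ℤ) : E3 :=
  (WithLp.equiv 2 (Fin 3 → ℝ)).symm ![2 * (m.1 : ℝ), (m.2.1 : ℝ), (m.2.2 : ℝ)]

/-- The cell `Q'_y = y + [−1,1] × [−1/2,1/2]²`. -/
def cell (y : E3) : Set E3 :=
  {z | z 0 ∈ Icc (y 0 - 1) (y 0 + 1) ∧ z 1 ∈ Icc (y 1 - 1/2) (y 1 + 1/2) ∧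
    z 2 ∈ Icc (y 2 - 1/2) (y 2 + 1/2)}

/-- `S'(y) = S(y) − fint_{Q'_y} S` (the cell has volume 2). -/
def S' (y : E3) : ℝ := S y - (1/2) * ∫ z in cell y, S z

/-- `|y|_∞` of the lattice point indexed by `m`. -/
def ynorm (m : ℤ × ℤ × ℤ) : ℝ := max |2 * (m.1 : ℝ)| (max |(m.2.1 : ℝ)| |(m.2.2 : ℝ)|)

lemma rpow_helper (r : ℝ) (hr : 0 ≤ r) (n : ℕ) :
    (r ^ 2) ^ (-(n : ℝ) / 2) = (r ^ n)⁻¹ := by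
  rw [← Real.rpow_natCast r 2, ← Real.rpow_mul hr,
    show ((2:ℕ) : ℝ) * (-(n : ℝ) / 2) = -(n : ℝ) by push_cast; ring, Real.rpow_neg hr, Real.rpow_natCast]

lemma S_eq : S = fun z : E3 => (z 0 ^ 2 - z 1 ^ 2) * ((‖z‖ ^ 2) ^ (-(5 : ℝ) / 2)) := by
  funext z
  rw [S, div_eq_mul_inv, show (-(5:ℝ)/2) = (-(5:ℕ) / 2 : ℝ) by norm_num, rpow_helper _ (norm_nonneg z)]

def DS (z : E3) : E3 →L[ℝ] ℝ :=
  (z 0 ^ 2 - z 1 ^ 2) • ((-(5 : ℝ) / 2 * (‖z‖ ^ 2) ^ (-(5 : ℝ) / 2 - 1)) • (2 • innerSL ℝ z)) +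
    ((‖z‖ ^ 2) ^ (-(5 : ℝ) / 2)) •
      ((2 * z 0) • (PiLp.proj 2 _ 0 : E3 →L[ℝ] ℝ) - (2 * z 1) • (PiLp.proj 2 _ 1 : E3 →L[ℝ] ℝ))

lemma hasFDerivAt_S (z : E3) (hz : z ≠ 0) : HasFDerivAt S (DS z) z := by
  have hns : HasFDerivAt (fun w : E3 => (‖w‖ ^ 2 : ℝ)) (2 • innerSL ℝ z) z := by
    simpa using (hasFDerivAt_id z).norm_sq
  have hpos : (0 : ℝ) < ‖z‖ ^ 2 := pow_pos (norm_pos_iff.mpr hz) 2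
  have hr : HasFDerivAt (fun w : E3 => (‖w‖ ^ 2) ^ (-(5 : ℝ) / 2))
      ((-(5 : ℝ) / 2 * (‖z‖ ^ 2) ^ (-(5 : ℝ) / 2 - 1)) • (2 • innerSL ℝ z)) z :=
    (Real.hasDerivAt_rpow_const (p := -(5 : ℝ) / 2) (Or.inl hpos.ne')).comp_hasFDerivAt (f := fun w : E3 => ‖w‖ ^ 2) z hns
  have hp0 : HasFDerivAt (fun w : E3 => w 0) (PiLp.proj 2 _ 0 : E3 →L[ℝ] ℝ) z :=
    (PiLp.proj 2 _ 0 : E3 →L[ℝ] ℝ).hasFDerivAt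
  have hp1 : HasFDerivAt (fun w : E3 => w 1) (PiLp.proj 2 _ 1 : E3 →L[ℝ] ℝ) z :=
    (PiLp.proj 2 _ 1 : E3 →L[ℝ] ℝ).hasFDerivAt
  have hpoly : HasFDerivAt (fun w : E3 => w 0 ^ 2 - w 1 ^ 2)
      ((2 * z 0) • (PiLp.proj 2 _ 0 : E3 →L[ℝ] ℝ) - (2 * z 1) • (PiLp.proj 2 _ 1 : E3 →L[ℝ] ℝ)) z := by
    have h0 := hp0.mul hp0
    have h1 := hp1.mul hp1
    have := h0.sub h1
    refine (this.congr_fderiv (by module)).congr_of_eventuallyEq (Filter.Eventually.of_forall fun w => ?_)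
    simp [pow_two]
  rw [S_eq]
  exact hpoly.mul hr

lemma sq_sum3 (z : E3) : z 0 ^ 2 + z 1 ^ 2 + z 2 ^ 2 = ‖z‖ ^ 2 := by
  rw [← real_inner_self_eq_norm_sq]
  simp only [PiLp.inner_apply, RCLike.inner_apply, conj_trivial, Fin.sum_univ_three]
  ring

lemma DS_norm_le {z : E3} {ρ : ℝ} (h0 : 0 < ρ) (hzρ : ρ ≤ ‖z‖) : ‖DS z‖ ≤ 3 / ρ ^ 4 := by
  have hrpos : 0 < ‖z‖ := lt_of_lt_of_le h0 hzρ
  apply ContinuousLinearMap.opNorm_le_bound _ (by positivity)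
  intro h
  set a := z 0 with ha; set b := z 1 with hb; set c := z 2 with hc
  set r := ‖z‖ with hrr
  have hrne : r ≠ 0 := ne_of_gt hrpos
  have hr2 : a ^ 2 + b ^ 2 + c ^ 2 = r ^ 2 := sq_sum3 z
  have hh2 : h 0 ^ 2 + h 1 ^ 2 + h 2 ^ 2 = ‖h‖ ^ 2 := sq_sum3 h
  have e5 : (r ^ 2) ^ (-(5 : ℝ) / 2) = (r ^ 5)⁻¹ := by
    rw [show (-(5:ℝ)/2) = (-(5:ℕ) / 2 : ℝ) by norm_num, rpow_helper _ (norm_nonneg z)]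
  have e7 : (r ^ 2) ^ (-(5 : ℝ) / 2 - 1) = (r ^ 7)⁻¹ := by
    rw [show (-(5:ℝ)/2 - 1) = (-(7:ℕ) / 2 : ℝ) by norm_num, rpow_helper _ (norm_nonneg z)]
  have e57 : (r ^ 5)⁻¹ = r ^ 2 * (r ^ 7)⁻¹ := by
    field_simp
  set A : ℝ := a * (2 * r ^ 2 - 5 * (a ^ 2 - b ^ 2)) * (r ^ 7)⁻¹ with hA
  set B : ℝ := -(b * (2 * r ^ 2 + 5 * (a ^ 2 - b ^ 2))) * (r ^ 7)⁻¹ with hB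
  set C : ℝ := -(5 * (a ^ 2 - b ^ 2) * c) * (r ^ 7)⁻¹ with hC
  have happ : DS z h = A * h 0 + B * h 1 + C * h 2 := by
    simp only [DS, ContinuousLinearMap.add_apply, ContinuousLinearMap.smul_apply,
      ContinuousLinearMap.sub_apply, ContinuousLinearMap.coe_smul', Pi.smul_apply,
      innerSL_apply_apply, smul_eq_mul, PiLp.inner_apply, RCLike.inner_apply, conj_trivial,
      Fin.sum_univ_three, PiLp.proj_apply, ← ha, ← hb, ← hc, ← hrr, e5, e7, e57, hA, hB, hC]
    ring
  have keypoly : a ^ 2 * (2 * r ^ 2 - 5 * (a ^ 2 - b ^ 2)) ^ 2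
      + b ^ 2 * (2 * r ^ 2 + 5 * (a ^ 2 - b ^ 2)) ^ 2
      + 25 * (a ^ 2 - b ^ 2) ^ 2 * c ^ 2 ≤ 9 * (r ^ 2) ^ 3 := by
    have hident : 9 * (r ^ 2) ^ 3
        - (a ^ 2 * (2 * r ^ 2 - 5 * (a ^ 2 - b ^ 2)) ^ 2
          + b ^ 2 * (2 * r ^ 2 + 5 * (a ^ 2 - b ^ 2)) ^ 2
          + 25 * (a ^ 2 - b ^ 2) ^ 2 * c ^ 2)
        = (a ^ 2 + b ^ 2 + c ^ 2)
          * (4 * (a ^ 2 + b ^ 2 + c ^ 2) * c ^ 2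
            + 5 * (2 * b ^ 2 + c ^ 2) * (2 * a ^ 2 + c ^ 2)) := by
      rw [← hr2]; ring
    nlinarith [hident, mul_nonneg (by positivity : (0:ℝ) ≤ a ^ 2 + b ^ 2 + c ^ 2)
      (by positivity : (0:ℝ) ≤ 4 * (a ^ 2 + b ^ 2 + c ^ 2) * c ^ 2
        + 5 * (2 * b ^ 2 + c ^ 2) * (2 * a ^ 2 + c ^ 2))]
  have hABC : A ^ 2 + B ^ 2 + C ^ 2 ≤ 9 / r ^ 8 := by
    have e1 : A ^ 2 + B ^ 2 + C ^ 2
        = (a ^ 2 * (2 * r ^ 2 - 5 * (a ^ 2 - b ^ 2)) ^ 2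
          + b ^ 2 * (2 * r ^ 2 + 5 * (a ^ 2 - b ^ 2)) ^ 2
          + 25 * (a ^ 2 - b ^ 2) ^ 2 * c ^ 2) * ((r ^ 7)⁻¹) ^ 2 := by
      rw [hA, hB, hC]; ring
    have e2 : (9 : ℝ) * (r ^ 2) ^ 3 * ((r ^ 7)⁻¹) ^ 2 = 9 / r ^ 8 := by
      field_simp
    rw [e1, ← e2]
    exact mul_le_mul_of_nonneg_right keypoly (by positivity)
  have h8 : (9:ℝ) / r ^ 8 ≤ 9 / ρ ^ 8 := by
    apply div_le_div_of_nonneg_left (by norm_num) (by positivity)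
    exact pow_le_pow_left₀ h0.le hzρ 8
  have lag : (A * h 0 + B * h 1 + C * h 2) ^ 2
      ≤ (A ^ 2 + B ^ 2 + C ^ 2) * (h 0 ^ 2 + h 1 ^ 2 + h 2 ^ 2) := by
    nlinarith [sq_nonneg (A * h 1 - B * h 0), sq_nonneg (A * h 2 - C * h 0),
      sq_nonneg (B * h 2 - C * h 1)]
  have hcs : (DS z h) ^ 2 ≤ (3 / ρ ^ 4 * ‖h‖) ^ 2 := by
    have e3 : (3 / ρ ^ 4 * ‖h‖) ^ 2 = 9 / ρ ^ 8 * ‖h‖ ^ 2 := by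
      field_simp; ring
    rw [happ, e3]
    calc (A * h 0 + B * h 1 + C * h 2) ^ 2
        ≤ (A ^ 2 + B ^ 2 + C ^ 2) * (h 0 ^ 2 + h 1 ^ 2 + h 2 ^ 2) := lag
      _ = (A ^ 2 + B ^ 2 + C ^ 2) * ‖h‖ ^ 2 := by rw [hh2]
      _ ≤ (9 / r ^ 8) * ‖h‖ ^ 2 := mul_le_mul_of_nonneg_right hABC (by positivity)
      _ ≤ (9 / ρ ^ 8) * ‖h‖ ^ 2 := mul_le_mul_of_nonneg_right h8 (by positivity)
  have habs : |DS z h| ≤ 3 / ρ ^ 4 * ‖h‖ := by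
    have h1 := Real.sqrt_le_sqrt hcs
    rwa [Real.sqrt_sq_eq_abs, Real.sqrt_sq (by positivity)] at h1
  simpa using habs

lemma mEquiv_apply (w : E3) (i : Fin 3) : ((MeasurableEquiv.toLp 2 (Fin 3 → ℝ)).symm) w i = w i := rfl

lemma cell_eq_preimage (y : E3) : cell y = ((MeasurableEquiv.toLp 2 (Fin 3 → ℝ)).symm) ⁻¹'
    (Set.univ.pi ![Icc (y 0 - 1) (y 0 + 1), Icc (y 1 - 1/2) (y 1 + 1/2),
      Icc (y 2 - 1/2) (y 2 + 1/2)]) := by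
  ext z
  simp only [cell, Set.mem_preimage, Set.mem_pi, Set.mem_univ, forall_true_left,
    Set.mem_setOf_eq]
  constructor
  · rintro ⟨h0, h1, h2⟩ i
    simp only [Set.mem_Icc] at h0 h1 h2
    fin_cases i <;>
      exact ⟨by simp [mEquiv_apply]; linarith [h0.1, h1.1, h2.1],
        by simp [mEquiv_apply]; linarith [h0.2, h1.2, h2.2]⟩
  · intro hi
    exact ⟨by simpa [mEquiv_apply] using hi 0, by simpa [mEquiv_apply] using hi 1,
      by simpa [mEquiv_apply] using hi 2⟩

lemma volume_cell (y : E3) : volume (cell y) = 2 := by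
  rw [cell_eq_preimage,
    (EuclideanSpace.volume_preserving_symm_measurableEquiv_toLp (Fin 3)).measure_preimage
      ((MeasurableSet.univ_pi
        (fun i => by fin_cases i <;> exact measurableSet_Icc)).nullMeasurableSet),
    volume_pi_pi, Fin.prod_univ_three]
  simp only [Matrix.cons_val_zero, Matrix.cons_val_one, Matrix.head_cons, Matrix.cons_val_two, Matrix.tail_cons, Real.volume_Icc]
  rw [show (y 0 + 1 - (y 0 - 1)) = 2 by ring, show (y 1 + 1/2 - (y 1 - 1/2)) = 1 by ring,
    show (y 2 + 1/2 - (y 2 - 1/2)) = 1 by ring]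
  norm_num

lemma abs_coord_le (y : E3) (i : Fin 3) : |y i| ≤ ‖y‖ := by
  have hsum : ∑ j : Fin 3, y j ^ 2 = ‖y‖ ^ 2 := by
    rw [Fin.sum_univ_three]; exact sq_sum3 y
  have h2 : |y i| ^ 2 ≤ ‖y‖ ^ 2 := by
    rw [sq_abs, ← hsum]
    exact Finset.single_le_sum (fun j _ => sq_nonneg (y j)) (Finset.mem_univ i)
  nlinarith [abs_nonneg (y i), norm_nonneg y]

lemma cell_measurable (y : E3) : MeasurableSet (cell y) := by
  rw [cell_eq_preimage]
  exact ((MeasurableEquiv.toLp 2 (Fin 3 → ℝ)).symm).measurable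
    (MeasurableSet.univ_pi (fun i => by fin_cases i <;> exact measurableSet_Icc))

lemma proj_continuous (i : Fin 3) : Continuous fun z : E3 => z i :=
  (PiLp.proj 2 (fun _ : Fin 3 => ℝ) i : E3 →L[ℝ] ℝ).continuous

lemma cell_convex (y : E3) : Convex ℝ (cell y) := by
  have : cell y = (fun z : E3 => z 0) ⁻¹' Icc (y 0 - 1) (y 0 + 1) ∩
      ((fun z : E3 => z 1) ⁻¹' Icc (y 1 - 1/2) (y 1 + 1/2) ∩
       (fun z : E3 => z 2) ⁻¹' Icc (y 2 - 1/2) (y 2 + 1/2)) := rfl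
  rw [this]
  refine Convex.inter ?_ (Convex.inter ?_ ?_) <;>
    exact (convex_Icc _ _).linear_preimage
      (PiLp.projₗ 2 (fun _ : Fin 3 => ℝ) _ : E3 →ₗ[ℝ] ℝ)

lemma norm_sub_cell {y : E3} {w : E3} (hw : w ∈ cell y) : ‖y - w‖ ≤ 3/2 := by
  obtain ⟨h0, h1, h2⟩ := hw
  simp only [Set.mem_Icc] at h0 h1 h2
  have hs : ‖y - w‖ ^ 2 ≤ (3/2) ^ 2 := by
    rw [← sq_sum3 (y - w)]
    have e : ∀ i : Fin 3, (y - w) i = y i - w i := fun i => rfl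
    rw [e 0, e 1, e 2]
    nlinarith [h0.1, h0.2, h1.1, h1.2, h2.1, h2.2]
  nlinarith [norm_nonneg (y - w)]

lemma cell_compact (y : E3) : IsCompact (cell y) := by
  apply Metric.isCompact_of_isClosed_isBounded
  · have : cell y = (fun z : E3 => z 0) ⁻¹' Icc (y 0 - 1) (y 0 + 1) ∩
        ((fun z : E3 => z 1) ⁻¹' Icc (y 1 - 1/2) (y 1 + 1/2) ∩
         (fun z : E3 => z 2) ⁻¹' Icc (y 2 - 1/2) (y 2 + 1/2)) := rfl
    rw [this]
    exact ((isClosed_Icc.preimage (proj_continuous 0)).inter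
      ((isClosed_Icc.preimage (proj_continuous 1)).inter
        (isClosed_Icc.preimage (proj_continuous 2))))
  · apply Bornology.IsBounded.subset (Metric.isBounded_closedBall (x := y) (r := 2))
    intro w hw
    rw [Metric.mem_closedBall, dist_eq_norm, norm_sub_rev]
    linarith [norm_sub_cell hw]

lemma S'_bound {y : E3} {ρ : ℝ} (hρ : 7/2 ≤ ρ) (hy : ρ + 3/2 ≤ ‖y‖) :
    |S' y| ≤ 9/2 * (ρ ^ 4)⁻¹ := by
  have hρ0 : (0:ℝ) < ρ := by linarith
  have hcell : ∀ w ∈ cell y, ρ ≤ ‖w‖ := by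
    intro w hw
    have h1 := norm_sub_cell hw
    have h2 : ‖y‖ - ‖w‖ ≤ ‖y - w‖ := norm_sub_norm_le y w
    linarith
  have hne : ∀ w ∈ cell y, w ≠ 0 := by
    intro w hw h0
    have := hcell w hw
    rw [h0, norm_zero] at this
    linarith
  have hder : ∀ w ∈ cell y, HasFDerivWithinAt S (DS w) (cell y) w := fun w hw =>
    (hasFDerivAt_S w (hne w hw)).hasFDerivWithinAt
  have hDb : ∀ w ∈ cell y, ‖DS w‖ ≤ 3 / ρ ^ 4 := fun w hw => DS_norm_le hρ0 (hcell w hw)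
  have hyin : y ∈ cell y := by
    refine ⟨?_, ?_, ?_⟩ <;> simp [Set.mem_Icc] <;> norm_num
  have hMVT : ∀ z ∈ cell y, |S y - S z| ≤ 3 / ρ ^ 4 * (3/2) := by
    intro z hz
    have h := (cell_convex y).norm_image_sub_le_of_norm_hasFDerivWithin_le hder hDb hz hyin
    have h2 : ‖y - z‖ ≤ 3/2 := norm_sub_cell hz
    calc |S y - S z| = ‖S y - S z‖ := rfl
      _ ≤ 3 / ρ ^ 4 * ‖y - z‖ := h
      _ ≤ 3 / ρ ^ 4 * (3/2) := by
          apply mul_le_mul_of_nonneg_left h2 (by positivity)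
  have hScont : ContinuousOn S (cell y) := by
    apply ContinuousOn.div
    · exact (((proj_continuous 0).pow 2).sub ((proj_continuous 1).pow 2)).continuousOn
    · exact (continuous_norm.pow 5).continuousOn
    · intro z hz
      have h1 := hcell z hz
      have h2 : (0:ℝ) < ‖z‖ := lt_of_lt_of_le hρ0 h1
      exact (pow_pos h2 5).ne'
  have hint : IntegrableOn S (cell y) := hScont.integrableOn_compact (cell_compact y)
  have hvol2 : (volume (cell y)).toReal = 2 := by rw [volume_cell]; simp
  have hvolfin : volume (cell y) < ⊤ := by rw [volume_cell]; exact ENNReal.ofNat_lt_top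
  have hS' : S' y = (1/2) * ∫ z in cell y, (S y - S z) := by
    rw [S', integral_sub (integrableOn_const (C := S y) hvolfin.ne) hint, setIntegral_const,
      measureReal_def, hvol2]
    simp only [smul_eq_mul]
    ring
  have hbig : ‖∫ z in cell y, (S y - S z)‖ ≤ (3 / ρ ^ 4 * (3/2)) * (volume (cell y)).toReal :=
    norm_setIntegral_le_of_norm_le_const hvolfin
      (fun z hz => hMVT z hz)
  rw [hS', abs_mul]
  rw [hvol2] at hbig
  have : |∫ z in cell y, (S y - S z)| ≤ 3 / ρ ^ 4 * (3/2) * 2 := hbig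
  calc |(1:ℝ)/2| * |∫ z in cell y, (S y - S z)| ≤ (1/2) * (3 / ρ ^ 4 * (3/2) * 2) := by
        rw [show |(1:ℝ)/2| = 1/2 by norm_num]
        exact mul_le_mul_of_nonneg_left this (by norm_num)
    _ = 9/2 * (ρ ^ 4)⁻¹ := by field_simp; ring

def Nn (m : ℤ × ℤ × ℤ) : ℕ := max (2 * m.1.natAbs) (max m.2.1.natAbs m.2.2.natAbs)

lemma ynorm_eq (m : ℤ × ℤ × ℤ) : ynorm m = (Nn m : ℝ) := by
  rw [ynorm, Nn]
  push_cast [Nat.cast_natAbs]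
  rw [abs_mul]
  norm_num

lemma norm_latt_ge (m : ℤ × ℤ × ℤ) : (Nn m : ℝ) ≤ ‖latt m‖ := by
  rw [← ynorm_eq, ynorm]
  refine max_le ?_ (max_le ?_ ?_)
  · exact abs_coord_le (latt m) 0
  · exact abs_coord_le (latt m) 1
  · exact abs_coord_le (latt m) 2

lemma S'_latt_bound {m : ℤ × ℤ × ℤ} (h5 : 5 ≤ Nn m) :
    |S' (latt m)| ≤ 9/2 * ((((Nn m : ℝ) - 3/2)) ^ 4)⁻¹ := by
  have h5' : (5:ℝ) ≤ (Nn m : ℝ) := by exact_mod_cast h5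
  exact S'_bound (by linarith) (by linarith [norm_latt_ge m])

def boxZ (a b : ℕ) : Finset (ℤ × ℤ × ℤ) :=
  (Finset.Icc (-(a:ℤ)) a) ×ˢ ((Finset.Icc (-(b:ℤ)) b) ×ˢ (Finset.Icc (-(b:ℤ)) b))

lemma card_boxZ (a b : ℕ) : (boxZ a b).card = (2*a+1) * ((2*b+1) * (2*b+1)) := by
  rw [boxZ, Finset.card_product, Finset.card_product, Int.card_Icc, Int.card_Icc]
  have ha : ((a:ℤ) + 1 - -(a:ℤ)).toNat = 2*a+1 := by omega
  have hb : ((b:ℤ) + 1 - -(b:ℤ)).toNat = 2*b+1 := by omega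
  rw [ha, hb]

lemma mem_boxZ {a b : ℕ} {m : ℤ × ℤ × ℤ} :
    m ∈ boxZ a b ↔ m.1.natAbs ≤ a ∧ m.2.1.natAbs ≤ b ∧ m.2.2.natAbs ≤ b := by
  simp only [boxZ, Finset.mem_product, Finset.mem_Icc]
  omega

lemma card_shell {n : ℕ} (hn : 2 ≤ n) (s : Finset (ℤ × ℤ × ℤ)) (hs : ∀ m ∈ s, Nn m = n) :
    s.card ≤ 17 * n^2 := by
  have hsub : s ⊆ boxZ (n/2) n \ boxZ ((n-1)/2) (n-1) := by
    intro m hm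
    have h := hs m hm
    have h1 : 2 * m.1.natAbs ≤ n := by rw [← h]; exact le_max_left _ _
    have h2 : m.2.1.natAbs ≤ n := by
      rw [← h]; exact le_trans (le_max_left _ _) (le_max_right _ _)
    have h3 : m.2.2.natAbs ≤ n := by
      rw [← h]; exact le_trans (le_max_right _ _) (le_max_right _ _)
    rw [Finset.mem_sdiff, mem_boxZ, mem_boxZ]
    refine ⟨⟨by omega, by omega, by omega⟩, ?_⟩
    rintro ⟨g1, g2, g3⟩
    have hle : Nn m ≤ n - 1 := max_le (by omega) (max_le (by omega) (by omega))
    omega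
  have hbsub : boxZ ((n-1)/2) (n-1) ⊆ boxZ (n/2) n := by
    intro m hm
    rw [mem_boxZ] at *
    omega
  have h1 := Finset.card_le_card hsub
  rw [Finset.card_sdiff_of_subset hbsub, card_boxZ, card_boxZ] at h1
  refine le_trans h1 ?_
  rw [Nat.sub_le_iff_le_add]
  have e1 : 2*(n/2) ≤ n := by omega
  have e2 : n ≤ 2*((n-1)/2) + 2 := by omega
  zify [show 1 ≤ n by omega]
  have hn2 : (2:ℤ) ≤ (n:ℤ) := by exact_mod_cast hn
  nlinarith [mul_le_mul_of_nonneg_right (show 2*((n:ℤ)/2)+1 ≤ (n:ℤ)+1 by omega)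
      (mul_self_nonneg (2*(n:ℤ)+1)),
    mul_le_mul_of_nonneg_right (show (n:ℤ)-1 ≤ 2*(((n:ℤ)-1)/2)+1 by omega)
      (mul_self_nonneg (2*((n:ℤ)-1)+1)), hn2]

def gw (n : ℕ) : ℝ := 9/2 * (((n:ℝ) - 3/2) ^ 4)⁻¹

lemma gw_nonneg (n : ℕ) : 0 ≤ gw n := by
  rw [gw]; positivity

lemma tele_bound {N₀ j : ℕ} (h5 : 5 ≤ N₀) (hj : N₀ ≤ j) :
    17 * (j:ℝ)^2 * gw j ≤ (153/2) * (((N₀:ℝ)/((N₀:ℝ) - 3/2))^2)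
      * ((((j:ℝ)) - 2)⁻¹ - (((j:ℝ) + 1) - 2)⁻¹) := by
  have ha5 : (5:ℝ) ≤ (N₀:ℝ) := by exact_mod_cast h5
  have hx : (N₀:ℝ) ≤ (j:ℝ) := by exact_mod_cast hj
  set a := (N₀:ℝ)
  set x := (j:ℝ)
  have hx5 : (5:ℝ) ≤ x := le_trans ha5 hx
  have hd : ((x - 2)⁻¹ - ((x + 1) - 2)⁻¹) = ((x-2)*(x-1))⁻¹ := by
    rw [show (x + 1 - 2 : ℝ) = x - 1 by ring]
    rw [inv_sub_inv (by linarith) (by linarith)]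
    rw [show (x - 1 - (x - 2) : ℝ) = 1 by ring]
    rw [one_div]
  rw [hd, gw]
  have key : x^2 * ((a - 3/2)^2 * ((x-2)*(x-1))) ≤ a^2 * ((x - 3/2)^4) := by
    have hA : x * (a - 3/2) ≤ a * (x - 3/2) := by nlinarith
    have hA2 : (x * (a - 3/2))^2 ≤ (a * (x - 3/2))^2 := by
      apply pow_le_pow_left₀ (by nlinarith) hA
    have hB : (x-2)*(x-1) ≤ (x - 3/2)^2 := by nlinarith
    nlinarith [mul_le_mul hA2 hB (by nlinarith) (by positivity)]
  have hx32 : (0:ℝ) < x - 3/2 := by linarith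
  have ha32 : (0:ℝ) < a - 3/2 := by linarith
  have hxx : (0:ℝ) < (x-2)*(x-1) := by nlinarith
  have hpos1 : (0:ℝ) < (x - 3/2)^4 := by positivity
  have hpos2 : (0:ℝ) < (a - 3/2)^2 * ((x-2)*(x-1)) := by positivity
  calc 17 * x^2 * (9/2 * ((x - 3/2)^4)⁻¹)
      = (153/2) * (x^2 / ((x - 3/2)^4)) := by ring
    _ ≤ (153/2) * (a^2 / ((a - 3/2)^2 * ((x-2)*(x-1)))) := by
        apply mul_le_mul_of_nonneg_left _ (by norm_num)
        rw [div_le_div_iff₀ hpos1 hpos2]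
        nlinarith [key]
    _ = (153/2) * ((a/(a - 3/2))^2) * (((x-2)*(x-1))⁻¹) := by
        rw [div_pow]
        have hne1 : ((a - 3/2):ℝ)^2 ≠ 0 := by positivity
        have hne2 : ((x-2)*(x-1) : ℝ) ≠ 0 := ne_of_gt hxx
        field_simp

lemma tele_sum (N₀ T : ℕ) (h5 : 5 ≤ N₀) :
    ∑ j ∈ Finset.Icc N₀ T, ((((j:ℝ)) - 2)⁻¹ - (((j:ℝ) + 1) - 2)⁻¹) ≤ ((N₀:ℝ) - 2)⁻¹ := by
  rw [← Finset.Ico_add_one_right_eq_Icc, Finset.sum_Ico_eq_sum_range]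
  have hcongr : ∀ i ∈ Finset.range (T + 1 - N₀),
      ((((N₀ + i :ℕ):ℝ)) - 2)⁻¹ - ((((N₀ + i :ℕ):ℝ) + 1) - 2)⁻¹
        = (fun i => (((N₀ + i :ℕ):ℝ) - 2)⁻¹) i - (fun i => (((N₀ + i :ℕ):ℝ) - 2)⁻¹) (i+1) := by
    intro i _
    simp only
    push_cast
    ring_nf
  rw [Finset.sum_congr rfl hcongr, Finset.sum_range_sub' (fun i => (((N₀ + i :ℕ):ℝ) - 2)⁻¹)]
  simp only [Nat.add_zero]
  have : (0:ℝ) ≤ (((N₀ + (T + 1 - N₀) :ℕ):ℝ) - 2)⁻¹ := by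
    have : (5:ℝ) ≤ ((N₀ + (T + 1 - N₀) :ℕ):ℝ) := by
      have : 5 ≤ N₀ + (T + 1 - N₀) := by omega
      exact_mod_cast this
    have h2 : (0:ℝ) < ((N₀ + (T + 1 - N₀) :ℕ):ℝ) - 2 := by linarith
    positivity
  linarith


def Bk (k : ℕ) : ℝ := (153/2) * (2*(k:ℝ)+1)^2 / ((2*(k:ℝ)-1/2)^2 * (2*(k:ℝ)-1))

lemma Bk_nonneg {k : ℕ} (hk : 2 ≤ k) : 0 ≤ Bk k := by
  have h2 : (2:ℝ) ≤ (k:ℝ) := by exact_mod_cast hk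
  rw [Bk]
  apply div_nonneg (by positivity)
  nlinarith [sq_nonneg (2*(k:ℝ)-1/2)]

lemma sum_bound (k : ℕ) (hk : 2 ≤ k) (s : Finset (ℤ × ℤ × ℤ))
    (hs : ∀ m ∈ s, 2*k+1 ≤ Nn m) : ∑ m ∈ s, |S' (latt m)| ≤ Bk k := by
  classical
  have hk5 : 5 ≤ 2*k+1 := by omega
  rcases s.eq_empty_or_nonempty with rfl | hne
  · simpa using Bk_nonneg hk
  set N₀ := 2*k+1 with hN₀
  set T := (s.image Nn).max' (hne.image _) with hT
  have hmaps : ∀ m ∈ s, Nn m ∈ Finset.Icc N₀ T := fun m hm =>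
    Finset.mem_Icc.2 ⟨hs m hm, Finset.le_max' _ _ (Finset.mem_image_of_mem _ hm)⟩
  have step1 : ∑ m ∈ s, |S' (latt m)| ≤ ∑ m ∈ s, gw (Nn m) := by
    apply Finset.sum_le_sum
    intro m hm
    have h5 : 5 ≤ Nn m := le_trans hk5 (hs m hm)
    simpa [gw] using S'_latt_bound h5
  have hinner : ∀ n ∈ Finset.Icc N₀ T,
      ∑ m ∈ s.filter (fun m => Nn m = n), gw (Nn m) ≤ (17*(n:ℝ)^2) * gw n := by
    intro n hn
    have hn2 : 2 ≤ n := by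
      have := (Finset.mem_Icc.1 hn).1
      omega
    have hfil : ∀ m ∈ s.filter (fun m => Nn m = n), Nn m = n :=
      fun m hm => (Finset.mem_filter.1 hm).2
    have heq : ∑ m ∈ s.filter (fun m => Nn m = n), gw (Nn m)
        = ((s.filter (fun m => Nn m = n)).card : ℝ) * gw n := by
      rw [Finset.sum_congr rfl (fun m hm => by rw [hfil m hm]), Finset.sum_const,
        nsmul_eq_mul]
    rw [heq]
    have hcard := card_shell hn2 _ hfil
    have hcard' : ((s.filter (fun m => Nn m = n)).card : ℝ) ≤ 17*(n:ℝ)^2 := by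
      exact_mod_cast hcard
    exact mul_le_mul_of_nonneg_right hcard' (gw_nonneg n)
  calc ∑ m ∈ s, |S' (latt m)| ≤ ∑ m ∈ s, gw (Nn m) := step1
    _ = ∑ n ∈ Finset.Icc N₀ T, ∑ m ∈ s.filter (fun m => Nn m = n), gw (Nn m) :=
        (Finset.sum_fiberwise_of_maps_to hmaps _).symm
    _ ≤ ∑ n ∈ Finset.Icc N₀ T, (17*(n:ℝ)^2) * gw n := Finset.sum_le_sum hinner
    _ ≤ ∑ n ∈ Finset.Icc N₀ T, (153/2) * (((N₀:ℝ)/((N₀:ℝ)-3/2))^2)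
          * ((((n:ℝ)) - 2)⁻¹ - (((n:ℝ)+1) - 2)⁻¹) := by
        apply Finset.sum_le_sum
        intro n hn
        exact tele_bound hk5 (Finset.mem_Icc.1 hn).1
    _ = (153/2) * (((N₀:ℝ)/((N₀:ℝ)-3/2))^2)
          * ∑ n ∈ Finset.Icc N₀ T, ((((n:ℝ)) - 2)⁻¹ - (((n:ℝ)+1) - 2)⁻¹) := by
        rw [Finset.mul_sum]
    _ ≤ (153/2) * (((N₀:ℝ)/((N₀:ℝ)-3/2))^2) * ((N₀:ℝ)-2)⁻¹ := by
        apply mul_le_mul_of_nonneg_left (tele_sum N₀ T hk5) (by positivity)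
    _ = Bk k := by
        have hKc : ((N₀:ℕ):ℝ) = 2*(k:ℝ)+1 := by rw [hN₀]; push_cast; ring
        have h2 : (2:ℝ) ≤ (k:ℝ) := by exact_mod_cast hk
        rw [Bk, hKc, div_pow]
        have hne1 : (2*(k:ℝ)+1-3/2) ≠ 0 := by intro h; nlinarith
        have hne2 : (2*(k:ℝ)+1-2) ≠ 0 := by intro h; nlinarith
        have hne3 : (2*(k:ℝ)-1/2) ≠ 0 := by intro h; nlinarith
        have hne4 : (2*(k:ℝ)-1) ≠ 0 := by intro h; nlinarith
        field_simp
        ring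

lemma Bk_le (k : ℕ) (hk : 2 ≤ k) :
    Bk k ≤ 84 * π * (4*(k:ℝ)-2)^2 / (4*(k:ℝ)-5)^3 := by
  have hK : (2:ℝ) ≤ (k:ℝ) := by exact_mod_cast hk
  set K := (k:ℝ) with hKdef
  have hd1 : (0:ℝ) < (2*K-1/2)^2 * (2*K-1) := by nlinarith [sq_nonneg (2*K-1/2)]
  have h45 : (0:ℝ) < 4*K-5 := by linarith
  have hd2 : (0:ℝ) < (4*K-5)^3 := pow_pos h45 3
  rw [Bk, div_le_div_iff₀ hd1 hd2]
  have hπ : (3.14:ℝ) ≤ π := by linarith [Real.pi_gt_d6]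
  have h1 : (4*K+2)*(4*K-5) ≤ (4*K-1)*(4*K-2) := by nlinarith
  have h2 : ((4*K+2)*(4*K-5))^2 ≤ ((4*K-1)*(4*K-2))^2 :=
    pow_le_pow_left₀ (by nlinarith) h1 2
  have h3 : (4*K-5) ≤ (4*K-2) := by linarith
  have main : ((4*K+2)*(4*K-5))^2 * (4*K-5) ≤ ((4*K-1)*(4*K-2))^2 * (4*K-2) :=
    mul_le_mul h2 h3 (by linarith) (sq_nonneg _)
  have hY : (0:ℝ) ≤ ((4*K-1)*(4*K-2))^2 * (4*K-2) := by
    apply mul_nonneg (sq_nonneg _) (by linarith)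
  have main2 : 153*(((4*K+2)*(4*K-5))^2 * (4*K-5))
      ≤ 84*π*(((4*K-1)*(4*K-2))^2 * (4*K-2)) := by
    calc 153*(((4*K+2)*(4*K-5))^2 * (4*K-5))
        ≤ 153*(((4*K-1)*(4*K-2))^2 * (4*K-2)) := by
          exact mul_le_mul_of_nonneg_left main (by norm_num)
      _ ≤ 84*π*(((4*K-1)*(4*K-2))^2 * (4*K-2)) := by
          apply mul_le_mul_of_nonneg_right (by linarith) hY
  nlinarith [main2]

/-- for `k ≥ 2`, the series `Σ_{y ∈ Λ, |y|_∞ > 2k} S'(y)` converges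
absolutely and `|Σ_{y ∈ Λ, |y|_∞ > 2k} S'(y)| ≤ 84π(4k−2)²/(4k−5)³`. -/
theorem stmt8 (k : ℕ) (hk : 2 ≤ k) :
    Summable (fun p : {m : ℤ × ℤ × ℤ // 2 * (k : ℝ) < ynorm m} => |S' (latt p.1)|) ∧
    |∑' p : {m : ℤ × ℤ × ℤ // 2 * (k : ℝ) < ynorm m}, S' (latt p.1)|
      ≤ 84 * π * (4 * (k : ℝ) - 2) ^ 2 / (4 * (k : ℝ) - 5) ^ 3 := by
  classical
  have key : ∀ s : Finset {m : ℤ × ℤ × ℤ // 2 * (k : ℝ) < ynorm m},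
      ∑ p ∈ s, |S' (latt p.1)| ≤ Bk k := by
    intro s
    have heq : ∑ p ∈ s, |S' (latt p.1)| = ∑ m ∈ s.image Subtype.val, |S' (latt m)| :=
      (Finset.sum_image (f := fun m => |S' (latt m)|)
        (fun x _ y _ h => Subtype.ext h)).symm
    rw [heq]
    apply sum_bound k hk
    intro m hm
    obtain ⟨p, hp, rfl⟩ := Finset.mem_image.1 hm
    have h := p.2
    rw [ynorm_eq] at h
    have h2 : 2*k < Nn p.val := by exact_mod_cast h
    omega
  have hsummable : Summable
      (fun p : {m : ℤ × ℤ × ℤ // 2 * (k : ℝ) < ynorm m} => |S' (latt p.1)|) :=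
    summable_of_sum_le (fun p => abs_nonneg _) key
  refine ⟨hsummable, ?_⟩
  have h1 : |∑' p : {m : ℤ × ℤ × ℤ // 2 * (k : ℝ) < ynorm m}, S' (latt p.1)|
      ≤ ∑' p : {m : ℤ × ℤ × ℤ // 2 * (k : ℝ) < ynorm m}, |S' (latt p.1)| := by
    have h := norm_tsum_le_tsum_norm
      (f := fun p : {m : ℤ × ℤ × ℤ // 2 * (k : ℝ) < ynorm m} => S' (latt p.1))
      (by simpa [Real.norm_eq_abs] using hsummable)
    simpa [Real.norm_eq_abs] using h
  have h2 : ∑' p : {m : ℤ × ℤ × ℤ // 2 * (k : ℝ) < ynorm m}, |S' (latt p.1)| ≤ Bk k :=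
    hsummable.tsum_le_of_sum_le key
  linarith [Bk_le k hk]

end
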